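/- Let u, v be positive integers with v < u, both powers of 2: v = 2^w, u = 2^t with w < t. Let b be an integer with u - v < b < u and b not a power of 2. Then b' = b + v satisfies u < b' and, if b' is not a power of 2, ltrim(b') ∈ ltrims(b). -/

import Mathlib

/-- `lpow b` is the largest power of 2 not exceeding `b` (for `b ≥ 1`). -/
def lpow (b : ℕ) : ℕ := 2 ^ Nat.log 2 b

/-- `ltrim b = b - lpow b`.  Note `ltrim b = 0` iff `b` is a power of 2 (or `b = 0`). -/
def ltrim (b : ℕ) : ℕ := b - lpow b

/-- `b` is a power of 2. -/
def pow2 (b : ℕ) : Prop := ∃ i : ℕ, b = 2 ^ i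

/-- `ltrims a` is the set of iterated values `ltrim a, ltrim (ltrim a), …`,
stopping (exclusively) when a power of 2 is reached:
`ltrims a = ∅` if `a` is a power of 2, and `ltrims a = {ltrim a} ∪ ltrims (ltrim a)` otherwise. -/
def ltrims : ℕ → Finset ℕ
  | a =>
    if h : ltrim a = 0 then ∅
    else
      have ha : 0 < a := by
        rcases Nat.eq_zero_or_pos a with h0 | h0
        · exfalso; apply h; simp [h0, ltrim, lpow]
        · exact h0
      have : ltrim a < a := Nat.sub_lt ha (Nat.pow_pos (by norm_num))
      insert (ltrim a) (ltrims (ltrim a))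
  termination_by a => a

lemma key (w : ℕ) : ∀ k c, w < k → 2 ^ k - 2 ^ w < c → c < 2 ^ k → c % 2 ^ w ≠ 0 →
    c % 2 ^ w ∈ ltrims c := by
  intro k
  induction k with
  | zero => intro c hwk; omega
  | succ k ih =>
    intro c hwk h1 h2 hr
    have hwk' : w ≤ k := by omega
    have hpw : 2 ^ w ≤ 2 ^ k := Nat.pow_le_pow_right (by norm_num) hwk'
    have hpk : 2 ^ (k + 1) = 2 * 2 ^ k := by ring
    have hcl : 2 ^ k ≤ c := by omega
    have hlog : Nat.log 2 c = k :=
      Nat.log_eq_of_pow_le_of_lt_pow hcl h2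
    have hltrim : ltrim c = c - 2 ^ k := by simp [ltrim, lpow, hlog]
    obtain ⟨m, hm⟩ : (2 : ℕ) ^ w ∣ 2 ^ k := pow_dvd_pow 2 hwk'
    have hmod : (c - 2 ^ k) % 2 ^ w = c % 2 ^ w := by
      have hc : c = 2 ^ w * m + (c - 2 ^ k) := by omega
      conv_rhs => rw [hc]
      rw [Nat.mul_add_mod]
    have hlt0 : ltrim c ≠ 0 := by
      rw [hltrim]; intro h
      apply hr; rw [← hmod, h]; simp
    rw [ltrims, dif_neg hlt0]
    rcases eq_or_lt_of_le hwk' with heq | hlt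
    · subst heq
      have hcc : c % 2 ^ w = c - 2 ^ w := by
        rw [Nat.mod_eq_sub_mod hcl, Nat.mod_eq_of_lt (by omega)]
      rw [hcc, ← hltrim]
      exact Finset.mem_insert_self _ _
    · apply Finset.mem_insert_of_mem
      have hb1 : 2 ^ k - 2 ^ w < ltrim c := by rw [hltrim]; omega
      have hb2 : ltrim c < 2 ^ k := by rw [hltrim]; omega
      have hb3 : ltrim c % 2 ^ w ≠ 0 := by rw [hltrim, hmod]; exact hr
      have := ih (ltrim c) hlt hb1 hb2 hb3
      rw [hltrim, hmod] at this
      rwa [hltrim]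

/-- Let `v = 2^w < u = 2^t` be powers of 2 and let `b` be a non-power-of-2 integer with
`u - v < b < u`.  Then `b' = b + v` satisfies `u < b'`, and if `b'` is not a power of 2
then `ltrim b' ∈ ltrims b`. -/
theorem stmt3 (w t : ℕ) (hwt : w < t) (b : ℕ)
    (h1 : 2 ^ t - 2 ^ w < b) (h2 : b < 2 ^ t) (hb : ¬ pow2 b) :
    2 ^ t < b + 2 ^ w ∧ (¬ pow2 (b + 2 ^ w) → ltrim (b + 2 ^ w) ∈ ltrims b) := by
  have hpw : 2 ^ w ≤ 2 ^ t := Nat.pow_le_pow_right (by norm_num) hwt.le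
  have hpt : 2 ^ (t + 1) = 2 * 2 ^ t := by ring
  have hgt : 2 ^ t < b + 2 ^ w := by omega
  refine ⟨hgt, fun hb' => ?_⟩
  have hlog : Nat.log 2 (b + 2 ^ w) = t :=
    Nat.log_eq_of_pow_le_of_lt_pow (by omega) (by omega)
  have hltrim : ltrim (b + 2 ^ w) = b + 2 ^ w - 2 ^ t := by
    simp [ltrim, lpow, hlog]
  -- ltrim (b + 2^w) = b % 2^w
  obtain ⟨m, hm⟩ : (2 : ℕ) ^ w ∣ 2 ^ t := pow_dvd_pow 2 hwt.le
  have hmod : b % 2 ^ w = b + 2 ^ w - 2 ^ t := by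
    have hc : b = 2 ^ w * (m - 1) + (b + 2 ^ w - 2 ^ t) := by
      have : 1 ≤ m := by nlinarith [(Nat.pow_pos (show 0 < 2 by norm_num) : 0 < 2 ^ t)]
      have : 2 ^ w * (m - 1) = 2 ^ t - 2 ^ w := by
        rw [Nat.mul_sub_one]; omega
      omega
    conv_lhs => rw [hc]
    rw [Nat.mul_add_mod, Nat.mod_eq_of_lt (by omega)]
  have hrne : b % 2 ^ w ≠ 0 := by
    rw [hmod]
    intro h
    apply hb'
    exact ⟨t, by omega⟩
  have := key w t b hwt h1 h2 hrne
  rwa [hltrim, ← hmod]
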